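/- High-frequency ℓ∞ estimate: let n ≥ 4 and let z: C_n → ℝ satisfy ∑_{j∈C_n} z_j = 0, ∑_{j∈C_n} z_j cos(2πj/n) = 0 and ∑_{j∈C_n} z_j sin(2πj/n) = 0 (i.e. z is orthogonal to constants and to V₁). Then Q(z) ≥ σ_n^{−1} ‖z‖_∞², where σ_n := 3/4 − (1/4)tan²(π/n) and ‖z‖_∞ := max_{i∈C_n} |z_i|. -/

import Mathlib

open Finset

namespace HFE

noncomputable def w (n : ℕ) : ℂ := Complex.exp (2 * Real.pi * Complex.I / n)

variable {n : ℕ}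

lemma w_pow_n (hn : n ≠ 0) : (w n) ^ n = 1 := (Complex.isPrimitiveRoot_exp n hn).pow_eq_one

lemma w_ne_zero (hn : n ≠ 0) : w n ≠ 0 := Complex.exp_ne_zero _

lemma w_pow_mod (hn : n ≠ 0) (a : ℕ) : (w n) ^ a = (w n) ^ (a % n) := by
  conv_lhs => rw [← Nat.div_add_mod a n]
  rw [pow_add, pow_mul, w_pow_n hn, one_pow, one_mul]

lemma w_pow_congr (hn : n ≠ 0) {a b : ℕ} (h : (a : ZMod n) = (b : ZMod n)) :
    (w n) ^ a = (w n) ^ b := by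
  rw [w_pow_mod hn a, w_pow_mod hn b]
  rw [ZMod.natCast_eq_natCast_iff] at h
  exact congrArg _ h

lemma conj_w (hn : n ≠ 0) : (starRingEnd ℂ) (w n) = (w n)⁻¹ := by
  rw [w, ← Complex.exp_conj, ← Complex.exp_neg]
  congr 1
  rw [map_div₀, map_mul, map_mul, Complex.conj_I, Complex.conj_ofReal, Complex.conj_natCast, map_ofNat]
  ring

lemma conj_w_pow (hn : n ≠ 0) (t : ℕ) :
    (starRingEnd ℂ) ((w n) ^ t) = (w n) ^ ((n - 1) * t) := by
  have h2 : (w n) ^ ((n-1) * t) * (w n) ^ t = 1 := by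
    rw [← pow_add]
    have h3 : (n-1) * t + t = n * t := by
      have h4 : n - 1 + 1 = n := Nat.succ_pred_eq_of_pos (Nat.pos_of_ne_zero hn)
      calc (n-1) * t + t = (n - 1 + 1) * t := by ring
        _ = n * t := by rw [h4]
    rw [h3, pow_mul, w_pow_n hn, one_pow]
  rw [map_pow, conj_w hn, inv_pow]
  exact (eq_inv_of_mul_eq_one_left h2).symm

lemma char_sum (hn : n ≠ 0) (m : ℕ) :
    ∑ j ∈ range n, (w n) ^ (j * m) = if n ∣ m then (n : ℂ) else 0 := by
  have hprim := Complex.isPrimitiveRoot_exp n hn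
  by_cases h : n ∣ m
  · simp only [h, if_true]
    have : ∀ j ∈ range n, (w n) ^ (j * m) = 1 := by
      intro j _
      obtain ⟨c, rfl⟩ := h
      rw [show j * (n * c) = n * (j * c) by ring, pow_mul, w_pow_n hn, one_pow]
    rw [Finset.sum_congr rfl this, Finset.sum_const, Finset.card_range, nsmul_eq_mul, mul_one]
  · simp only [h, if_false]
    have hne : (w n) ^ m ≠ 1 := fun hc => h (hprim.pow_eq_one_iff_dvd m |>.mp hc)
    have : ∑ j ∈ range n, (w n) ^ (j * m) = ∑ j ∈ range n, ((w n) ^ m) ^ j := by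
      refine Finset.sum_congr rfl fun j _ => ?_
      rw [← pow_mul, mul_comm]
    rw [this, geom_sum_eq hne, ← pow_mul, mul_comm m n, pow_mul, w_pow_n hn, one_pow,
      sub_self, zero_div]


lemma delta_sum [NeZero n] (a b : ZMod n) :
    ∑ k ∈ range n, (w n) ^ (ZMod.val a * k) * (starRingEnd ℂ) ((w n) ^ (ZMod.val b * k)) =
      if a = b then (n : ℂ) else 0 := by
  have hn : n ≠ 0 := NeZero.ne n
  have key : ∀ k, (w n) ^ (ZMod.val a * k) * (starRingEnd ℂ) ((w n) ^ (ZMod.val b * k)) =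
      (w n) ^ (k * (ZMod.val a + (n - 1) * ZMod.val b)) := by
    intro k
    rw [conj_w_pow hn, ← pow_add]
    apply w_pow_congr hn
    push_cast
    ring
  rw [Finset.sum_congr rfl (fun k _ => key k), char_sum hn]
  congr 1
  rw [← ZMod.natCast_eq_zero_iff]
  push_cast
  have h1 : ((n - 1 : ℕ) : ZMod n) = -1 := by
    have : ((n : ℕ) : ZMod n) = 0 := ZMod.natCast_self n
    rw [Nat.cast_sub (Nat.one_le_iff_ne_zero.mpr hn), this, Nat.cast_one, zero_sub]
  rw [ZMod.natCast_val, ZMod.natCast_val, ZMod.cast_id, ZMod.cast_id, h1]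
  have h2 : a + -1 * b = a - b := by ring
  rw [h2, sub_eq_zero]

noncomputable def F (n : ℕ) [NeZero n] (x : ZMod n → ℝ) (k : ℕ) : ℂ :=
  ∑ j : ZMod n, (x j : ℂ) * (w n) ^ (ZMod.val j * k)

lemma parseval [NeZero n] (x y : ZMod n → ℝ) :
    ∑ k ∈ range n, F n x k * (starRingEnd ℂ) (F n y k) =
      (n : ℂ) * ∑ j : ZMod n, (x j * y j : ℝ) := by
  have expand : ∀ k, F n x k * (starRingEnd ℂ) (F n y k) =
      ∑ j : ZMod n, ∑ j' : ZMod n, ((x j : ℂ) * (y j' : ℂ)) *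
        ((w n) ^ (ZMod.val j * k) * (starRingEnd ℂ) ((w n) ^ (ZMod.val j' * k))) := by
    intro k
    rw [F, F, map_sum, Finset.sum_mul_sum]
    refine Finset.sum_congr rfl fun j _ => Finset.sum_congr rfl fun j' _ => ?_
    rw [map_mul, Complex.conj_ofReal]
    ring
  rw [Finset.sum_congr rfl (fun k _ => expand k), Finset.sum_comm]
  have swap2 : ∀ j : ZMod n, ∑ k ∈ range n, ∑ j' : ZMod n, ((x j : ℂ) * (y j' : ℂ)) *
        ((w n) ^ (ZMod.val j * k) * (starRingEnd ℂ) ((w n) ^ (ZMod.val j' * k)))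
      = (x j : ℂ) * (y j : ℂ) * n := by
    intro j
    rw [Finset.sum_comm]
    have : ∀ j' : ZMod n, ∑ k ∈ range n, ((x j : ℂ) * (y j' : ℂ)) *
        ((w n) ^ (ZMod.val j * k) * (starRingEnd ℂ) ((w n) ^ (ZMod.val j' * k)))
        = ((x j : ℂ) * (y j' : ℂ)) * (if j = j' then (n : ℂ) else 0) := by
      intro j'
      rw [← Finset.mul_sum, delta_sum j j']
    rw [Finset.sum_congr rfl (fun j' _ => this j')]
    simp [mul_ite, Finset.sum_ite_eq]
  rw [Finset.sum_congr rfl (fun j _ => swap2 j)]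
  push_cast
  rw [← Finset.sum_mul]
  ring

-- angle as real
lemma w_pow_eq (m : ℕ) : (w n) ^ m = Complex.exp (((2 * Real.pi * m / n : ℝ) : ℂ) * Complex.I) := by
  rw [w, ← Complex.exp_nat_mul]
  congr 1
  push_cast
  by_cases hn : (n : ℂ) = 0
  · simp [hn]
  · field_simp

lemma w_pow_re_im (m : ℕ) : (w n) ^ m =
    (Real.cos (2 * Real.pi * m / n) : ℂ) + (Real.sin (2 * Real.pi * m / n) : ℂ) * Complex.I := by
  rw [w_pow_eq, Complex.exp_mul_I, ← Complex.ofReal_cos, ← Complex.ofReal_sin]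

lemma norm_w_pow (m : ℕ) : ‖(w n) ^ m‖ = 1 := by
  rw [w_pow_eq, Complex.norm_exp]
  simp

-- inversion
lemma inversion [NeZero n] (x : ZMod n → ℝ) (i : ZMod n) :
    ∑ k ∈ range n, F n x k * (starRingEnd ℂ) ((w n) ^ (ZMod.val i * k)) = (n : ℂ) * x i := by
  have : ∀ k ∈ range n, F n x k * (starRingEnd ℂ) ((w n) ^ (ZMod.val i * k)) =
      ∑ j : ZMod n, (x j : ℂ) * ((w n) ^ (ZMod.val j * k) * (starRingEnd ℂ) ((w n) ^ (ZMod.val i * k))) := by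
    intro k _
    rw [F, Finset.sum_mul]
    exact Finset.sum_congr rfl fun j _ => by ring
  rw [Finset.sum_congr rfl this, Finset.sum_comm]
  have : ∀ j : ZMod n, ∑ k ∈ range n, (x j : ℂ) *
      ((w n) ^ (ZMod.val j * k) * (starRingEnd ℂ) ((w n) ^ (ZMod.val i * k)))
      = (x j : ℂ) * (if j = i then (n:ℂ) else 0) := by
    intro j
    rw [← Finset.mul_sum, delta_sum j i]
  rw [Finset.sum_congr rfl (fun j _ => this j)]
  simp [mul_ite, Finset.sum_ite_eq']
  ring

lemma cast_pred (hn : n ≠ 0) : ((n - 1 : ℕ) : ZMod n) = -1 := by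
  rw [Nat.cast_sub (Nat.one_le_iff_ne_zero.mpr hn), ZMod.natCast_self, Nat.cast_one, zero_sub]

-- shift
lemma F_shift [NeZero n] (x : ZMod n → ℝ) (k : ℕ) :
    F n (fun j => x (j + 1)) k = (w n) ^ ((n - 1) * k) * F n x k := by
  have hn : n ≠ 0 := NeZero.ne n
  rw [F, F, Finset.mul_sum]
  apply Fintype.sum_equiv (Equiv.addRight (1 : ZMod n))
  intro j
  simp only [Equiv.coe_addRight]
  have : (w n) ^ (ZMod.val j * k) = (w n) ^ ((n-1) * k + ZMod.val (j + 1) * k) := by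
    apply w_pow_congr hn
    push_cast [ZMod.natCast_val, ZMod.cast_id, cast_pred hn]
    ring
  rw [this, pow_add]
  ring


lemma F_zero_eq [NeZero n] (z : ZMod n → ℝ) (h0 : ∑ j, z j = 0) : F n z 0 = 0 := by
  rw [F]
  simp only [mul_zero, pow_zero, mul_one]
  rw [← Complex.ofReal_sum, h0, Complex.ofReal_zero]

lemma F_one_eq [NeZero n] (z : ZMod n → ℝ)
    (hcos : ∑ j, z j * Real.cos (2 * Real.pi * ((ZMod.val j) : ℝ) / n) = 0)
    (hsin : ∑ j, z j * Real.sin (2 * Real.pi * ((ZMod.val j) : ℝ) / n) = 0) :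
    F n z 1 = 0 := by
  rw [F]
  have key : ∀ j : ZMod n, (z j : ℂ) * (w n) ^ (ZMod.val j * 1) =
      ((z j * Real.cos (2 * Real.pi * (ZMod.val j) / n) : ℝ) : ℂ) +
      ((z j * Real.sin (2 * Real.pi * (ZMod.val j) / n) : ℝ) : ℂ) * Complex.I := by
    intro j
    rw [mul_one, w_pow_re_im]
    push_cast
    ring
  rw [Finset.sum_congr rfl (fun j _ => key j), Finset.sum_add_distrib,
    ← Complex.ofReal_sum, ← Finset.sum_mul, ← Complex.ofReal_sum, hcos, hsin]
  simp

lemma F_pred_eq [NeZero n] (z : ZMod n → ℝ) (h1 : F n z 1 = 0) : F n z (n - 1) = 0 := by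
  have hn : n ≠ 0 := NeZero.ne n
  have : F n z (n - 1) = (starRingEnd ℂ) (F n z 1) := by
    rw [F, F, map_sum]
    refine Finset.sum_congr rfl fun j _ => ?_
    rw [map_mul, Complex.conj_ofReal, mul_one, conj_w_pow hn, mul_comm (n-1) (ZMod.val j)]
  rw [this, h1, map_zero]

lemma parseval_normSq [NeZero n] (x : ZMod n → ℝ) :
    ∑ k ∈ range n, ‖F n x k‖ ^ 2 = n * ∑ j : ZMod n, (x j) ^ 2 := by
  have h := parseval x x
  have key : ∀ k, F n x k * (starRingEnd ℂ) (F n x k) = ((‖F n x k‖ ^ 2 : ℝ) : ℂ) := by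
    intro k
    rw [Complex.mul_conj]
    norm_cast
    rw [Complex.normSq_eq_norm_sq]
  rw [Finset.sum_congr rfl (fun k _ => key k), ← Complex.ofReal_sum] at h
  have h2 : ((∑ k ∈ range n, ‖F n x k‖ ^ 2 : ℝ) : ℂ) = (((n : ℝ) * ∑ j : ZMod n, (x j)^2 : ℝ) : ℂ) := by
    rw [h]
    push_cast
    congr 1
    exact Finset.sum_congr rfl fun j _ => by rw [sq]
  exact_mod_cast h2

lemma norm_one_sub_w_pow (hn : n ≠ 0) (k : ℕ) :
    ‖1 - (w n) ^ ((n - 1) * k)‖ ^ 2 = 2 - 2 * Real.cos (2 * Real.pi * k / n) := by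
  rw [← conj_w_pow hn k]
  have : (1 : ℂ) - (starRingEnd ℂ) ((w n) ^ k) = (starRingEnd ℂ) (1 - (w n) ^ k) := by
    rw [map_sub, map_one]
  rw [this, RCLike.norm_conj, w_pow_re_im]
  rw [Complex.sq_norm, Complex.normSq_apply]
  simp only [Complex.sub_re, Complex.sub_im, Complex.one_re, Complex.one_im,
    Complex.add_re, Complex.add_im, Complex.ofReal_re, Complex.ofReal_im,
    Complex.mul_re, Complex.mul_im, Complex.I_re, Complex.I_im]
  nlinarith [Real.sin_sq_add_cos_sq (2 * Real.pi * k / n)]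

lemma F_diff_norm [NeZero n] (z : ZMod n → ℝ) (k : ℕ) :
    ‖F n (fun j => z j - z (j + 1)) k‖ ^ 2 =
      (2 - 2 * Real.cos (2 * Real.pi * k / n)) * ‖F n z k‖ ^ 2 := by
  have hn : n ≠ 0 := NeZero.ne n
  have hlin : F n (fun j => z j - z (j + 1)) k = (1 - (w n) ^ ((n-1) * k)) * F n z k := by
    rw [sub_mul, one_mul, ← F_shift]
    rw [F, F, F, ← Finset.sum_sub_distrib]
    refine Finset.sum_congr rfl fun j _ => ?_
    push_cast
    ring
  rw [hlin, norm_mul, mul_pow, norm_one_sub_w_pow hn]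

lemma sum_c_identity [NeZero n] (z : ZMod n → ℝ)
    (hlam : 1 - Real.cos (2 * Real.pi / n) ≠ 0) :
    ∑ k ∈ range n, ((2 - 2 * Real.cos (2 * Real.pi * k / n)) / (1 - Real.cos (2 * Real.pi / n)) - 2)
        * ‖F n z k‖ ^ 2
      = (n : ℝ) ^ 2 * (1 / (1 - Real.cos (2 * Real.pi / n)) * ((∑ j, (z j - z (j + 1)) ^ 2) / n) -
          2 * ((∑ j, (z j) ^ 2) / n)) := by
  have hn : (n : ℝ) ≠ 0 := Nat.cast_ne_zero.mpr (NeZero.ne n)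
  have hd := parseval_normSq (n := n) (fun j => z j - z (j + 1))
  have hz := parseval_normSq (n := n) z
  have key : ∀ k ∈ range n,
      ((2 - 2 * Real.cos (2 * Real.pi * k / n)) / (1 - Real.cos (2 * Real.pi / n)) - 2) * ‖F n z k‖ ^ 2
      = (1 / (1 - Real.cos (2 * Real.pi / n))) * ‖F n (fun j => z j - z (j + 1)) k‖ ^ 2
        - 2 * ‖F n z k‖ ^ 2 := by
    intro k _
    rw [F_diff_norm]
    field_simp
  rw [Finset.sum_congr rfl key, Finset.sum_sub_distrib, ← Finset.mul_sum, ← Finset.mul_sum,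
    hd, hz]
  field_simp

noncomputable def ctn (x : ℝ) : ℝ := Real.cos x / Real.sin x

-- product formula
lemma cos_diff_eq (α : ℝ) (k : ℝ) :
    Real.cos (2 * α) - Real.cos (2 * (k * α)) =
      2 * Real.sin ((k + 1) * α) * Real.sin ((k - 1) * α) := by
  rw [Real.cos_sub_cos]
  have h1 : (2 * α + 2 * (k * α)) / 2 = (k + 1) * α := by ring
  have h2 : (2 * α - 2 * (k * α)) / 2 = -((k - 1) * α) := by ring
  rw [h1, h2, Real.sin_neg]
  ring

lemma sin_pos_of_mem (n : ℕ) (hn : 4 ≤ n) {m : ℕ} (hm1 : 1 ≤ m) (hm2 : m ≤ n - 1) :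
    0 < Real.sin ((m : ℝ) * (Real.pi / n)) := by
  have hnpos : (0 : ℝ) < n := by positivity
  apply Real.sin_pos_of_pos_of_lt_pi
  · have : (1 : ℝ) ≤ (m : ℝ) := by exact_mod_cast hm1
    have := Real.pi_pos
    have : (0:ℝ) < Real.pi / n := by positivity
    nlinarith [Real.pi_pos]
  · have hmn : (m : ℝ) < n := by
      have : m < n := by omega
      exact_mod_cast this
    calc (m : ℝ) * (Real.pi / n) < n * (Real.pi / n) := by
          apply mul_lt_mul_of_pos_right hmn
          positivity
      _ = Real.pi := by field_simp
  
-- telescoping step function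
noncomputable def g (α : ℝ) (m : ℕ) : ℝ := ctn (m * α) + ctn ((m + 1 : ℕ) * α)

lemma term_eq (n : ℕ) (hn : 4 ≤ n) (k : ℕ) (hk : k ∈ Finset.Icc 2 (n - 2)) :
    (1 - Real.cos (2 * Real.pi / n)) /
        (2 * (Real.cos (2 * Real.pi / n) - Real.cos (2 * Real.pi * k / n)))
      = Real.sin (Real.pi / n) ^ 2 / (2 * Real.sin (2 * (Real.pi / n))) *
          (g (Real.pi / n) (k - 1) - g (Real.pi / n) k) := by
  set α := Real.pi / n with hα
  obtain ⟨hk2, hkn⟩ := Finset.mem_Icc.mp hk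
  have hnpos : (0 : ℝ) < n := by positivity
  -- angle rewrites
  have e1 : 2 * Real.pi / n = 2 * α := by rw [hα]; ring
  have e2 : 2 * Real.pi * k / n = 2 * ((k : ℝ) * α) := by rw [hα]; ring
  -- sines positive
  have hsu : 0 < Real.sin (((k - 1 : ℕ) : ℝ) * α) := sin_pos_of_mem n hn (by omega) (by omega)
  have hsv : 0 < Real.sin (((k + 1 : ℕ) : ℝ) * α) := sin_pos_of_mem n hn (by omega) (by omega)
  have hsk : 0 < Real.sin ((k : ℝ) * α) := sin_pos_of_mem n hn (by omega) (by omega)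
  have hs1 : 0 < Real.sin ((1 : ℝ) * α) := by
    have := sin_pos_of_mem n hn (m := 1) (by omega) (by omega)
    exact_mod_cast this
  have hs2 : 0 < Real.sin (2 * α) := by
    have := sin_pos_of_mem n hn (m := 2) (by omega) (by omega)
    calc (0:ℝ) < Real.sin (((2:ℕ) : ℝ) * α) := this
      _ = Real.sin (2 * α) := by norm_num
  have hcastm : ((k - 1 : ℕ) : ℝ) = (k : ℝ) - 1 := by
    have : (1:ℕ) ≤ k := by omega
    push_cast [Nat.cast_sub this]
    ring
  have hcastp : ((k + 1 : ℕ) : ℝ) = (k : ℝ) + 1 := by push_cast; ring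
  -- cos difference formula
  have hprod : Real.cos (2 * α) - Real.cos (2 * ((k:ℝ) * α)) =
      2 * Real.sin (((k:ℝ) + 1) * α) * Real.sin (((k:ℝ) - 1) * α) := cos_diff_eq α k
  -- 1 - cos 2α = 2 sin² α
  have hlam : 1 - Real.cos (2 * α) = 2 * Real.sin α ^ 2 := by
    rw [Real.cos_two_mul]
    nlinarith [Real.sin_sq_add_cos_sq α]
  -- g difference
  have hgd : g α (k - 1) - g α k = ctn (((k:ℝ) - 1) * α) - ctn (((k:ℝ) + 1) * α) := by
    rw [g, g]
    have h1 : (k - 1 + 1 : ℕ) = k := by omega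
    rw [h1, hcastm, hcastp]
    ring
  rw [e1, e2, hprod, hgd]
  -- cot difference = sin(2α)/(su * sv)
  have hsu' : Real.sin (((k:ℝ) - 1) * α) ≠ 0 := by rw [← hcastm]; exact ne_of_gt hsu
  have hsv' : Real.sin (((k:ℝ) + 1) * α) ≠ 0 := by rw [← hcastp]; exact ne_of_gt hsv
  have hnum : Real.cos (((k:ℝ) - 1) * α) * Real.sin (((k:ℝ) + 1) * α) -
      Real.sin (((k:ℝ) - 1) * α) * Real.cos (((k:ℝ) + 1) * α) = Real.sin (2 * α) := by
    have h := Real.sin_sub (((k:ℝ) + 1) * α) (((k:ℝ) - 1) * α)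
    have harg : ((k:ℝ) + 1) * α - ((k:ℝ) - 1) * α = 2 * α := by ring
    rw [harg] at h
    rw [h]
    ring
  have hs1' : Real.sin α > 0 := by
    have := hs1; rwa [one_mul] at this
  rw [ctn, ctn, hlam]
  rw [div_sub_div _ _ hsu' hsv', hnum]
  field_simp

lemma sigma_sum (n : ℕ) (hn : 4 ≤ n) :
    ∑ k ∈ Finset.Icc 2 (n - 2),
      (1 - Real.cos (2 * Real.pi / n)) /
        (2 * (Real.cos (2 * Real.pi / n) - Real.cos (2 * Real.pi * k / n)))
    = 3 / 4 - 1 / 4 * Real.tan (Real.pi / n) ^ 2 := by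
  have hnpos : (0 : ℝ) < n := by positivity
  set α := Real.pi / n with hα
  rw [Finset.sum_congr rfl (fun k hk => term_eq n hn k hk), ← Finset.mul_sum]
  -- telescope
  have htel : ∑ k ∈ Finset.Icc 2 (n - 2), (g α (k - 1) - g α k) = g α 1 - g α (n - 2) := by
    have hicc : Finset.Icc 2 (n - 2) = Finset.Ico 2 (n - 1) := by
      rw [← Finset.Ico_add_one_right_eq_Icc]
      congr 1
      omega
    rw [hicc, Finset.sum_Ico_eq_sum_range]
    have key : ∀ i ∈ Finset.range (n - 1 - 2), g α (2 + i - 1) - g α (2 + i) =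
        (fun m => g α (m + 1)) i - (fun m => g α (m + 1)) (i + 1) := by
      intro i _
      simp only
      congr 2 <;> omega
    rw [Finset.sum_congr rfl key, Finset.sum_range_sub']
    have h1 : n - 1 - 2 + 1 = n - 2 := by omega
    simp only [h1, Nat.zero_add]
  rw [htel]
  -- positivity facts
  have hs : 0 < Real.sin α := by
    have := sin_pos_of_mem n hn (m := 1) (by omega) (by omega)
    rwa [Nat.cast_one, one_mul] at this
  have hapos : 0 < α := by rw [hα]; positivity
  have halt : α < Real.pi / 2 := by
    rw [hα]
    rw [div_lt_div_iff₀ hnpos (by norm_num)]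
    have h4 : (4:ℝ) ≤ n := by exact_mod_cast hn
    nlinarith [Real.pi_pos]
  have hc : 0 < Real.cos α := Real.cos_pos_of_mem_Ioo ⟨by linarith [Real.pi_pos], halt⟩
  have hs2 : 0 < Real.sin (2 * α) := by
    have := sin_pos_of_mem n hn (m := 2) (by omega) (by omega)
    have h2 : ((2:ℕ):ℝ) * α = 2 * α := by norm_num
    rwa [h2] at this
  -- endpoint values
  have hg1 : g α 1 = Real.cos α / Real.sin α + Real.cos (2 * α) / Real.sin (2 * α) := by
    rw [g, ctn, ctn]
    norm_num
  have hgn : g α (n - 2) = -(Real.cos (2*α) / Real.sin (2*α)) - Real.cos α / Real.sin α := by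
    rw [g, ctn, ctn]
    have e1 : ((n - 2 : ℕ) : ℝ) * α = Real.pi - 2 * α := by
      have hcast : ((n - 2 : ℕ) : ℝ) = (n : ℝ) - 2 := by
        have : (2:ℕ) ≤ n := by omega
        push_cast [Nat.cast_sub this]
        ring
      rw [hcast, hα]
      field_simp
    have e2 : ((n - 2 + 1 : ℕ) : ℝ) * α = Real.pi - α := by
      have hcast : ((n - 2 + 1 : ℕ) : ℝ) = (n : ℝ) - 1 := by
        have : (2:ℕ) ≤ n := by omega
        push_cast [Nat.cast_sub this]
        ring
      rw [hcast, hα]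
      field_simp
    rw [e1, e2, Real.cos_pi_sub, Real.sin_pi_sub, Real.cos_pi_sub, Real.sin_pi_sub]
    ring
  rw [hg1, hgn]
  -- final algebra
  have hpy := Real.sin_sq_add_cos_sq α
  have hs' : Real.sin α ≠ 0 := ne_of_gt hs
  have hc' : Real.cos α ≠ 0 := ne_of_gt hc
  have hs2' : Real.sin (2 * α) ≠ 0 := ne_of_gt hs2
  rw [show (2 : ℝ) * α = α + α by ring] at hs2' ⊢
  simp only [Real.sin_add, Real.cos_add, Real.tan_eq_sin_div_cos] at hs2' ⊢
  field_simp
  nlinarith [hpy, sq_nonneg (Real.sin α * Real.cos α), sq_nonneg (Real.sin α), mul_pos hs hc]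


end HFE


open HFE Finset in
/-- High-frequency ℓ∞ estimate: let `n ≥ 4` and let `z : C_n → ℝ` be orthogonal to the
constants and to the first eigenspace `V₁` (spanned by `j ↦ cos(2πj/n)` and
`j ↦ sin(2πj/n)`). Then `Q(z) := (1/λ_n) D(z) - 2‖z‖₂² ≥ σ_n⁻¹ ‖z‖_∞²`, where
`λ_n = 1 - cos(2π/n)`, `D(z) = (1/n)∑_j (z_j - z_{j+1})^2`, `‖z‖₂² = (1/n)∑_j z_j²`
and `σ_n = 3/4 - (1/4)tan²(π/n)`. -/
theorem high_frequency_linfty_estimate (n : ℕ) [NeZero n] (hn : 4 ≤ n) (z : ZMod n → ℝ)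
    (h0 : ∑ j, z j = 0)
    (hcos : ∑ j, z j * Real.cos (2 * Real.pi * (j.val : ℝ) / n) = 0)
    (hsin : ∑ j, z j * Real.sin (2 * Real.pi * (j.val : ℝ) / n) = 0) :
    1 / (1 - Real.cos (2 * Real.pi / n)) * ((∑ j, (z j - z (j + 1)) ^ 2) / n) -
        2 * ((∑ j, (z j) ^ 2) / n) ≥
      (3 / 4 - 1 / 4 * Real.tan (Real.pi / n) ^ 2)⁻¹ *
        (Finset.univ.sup' Finset.univ_nonempty fun i => |z i|) ^ 2 := by
  have hnne : n ≠ 0 := NeZero.ne n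
  have hnpos : (0:ℝ) < n := by positivity
  set α := Real.pi / n with hα
  -- basic positivity
  have hsina : 0 < Real.sin α := by
    have := sin_pos_of_mem n hn (m := 1) (by omega) (by omega)
    rwa [Nat.cast_one, one_mul] at this
  have hlam0 : 1 - Real.cos (2 * Real.pi / n) = 2 * Real.sin α ^ 2 := by
    have h2 : 2 * Real.pi / (n:ℝ) = 2 * α := by rw [hα]; ring
    rw [h2, Real.cos_two_mul]
    nlinarith [Real.sin_sq_add_cos_sq α]
  have hlam : 0 < 1 - Real.cos (2 * Real.pi / n) := by rw [hlam0]; positivity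
  -- the coefficient c
  set lam := 1 - Real.cos (2 * Real.pi / n) with hlamdef
  set c : ℕ → ℝ := fun k => (2 - 2 * Real.cos (2 * Real.pi * k / n)) / lam - 2 with hc
  have hc_eq : ∀ k : ℕ, c k = 2 * (Real.cos (2 * Real.pi / n) - Real.cos (2 * Real.pi * k / n)) / lam := by
    intro k
    rw [hc]
    field_simp [hlamdef]
    ring
  set K := Finset.Icc 2 (n - 2) with hK
  have hKsub : K ⊆ range n := by
    intro k hk
    rw [hK, Finset.mem_Icc] at hk
    rw [Finset.mem_range]
    omega
  -- positivity of c on K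
  have hcpos : ∀ k ∈ K, 0 < c k := by
    intro k hk
    rw [hK, Finset.mem_Icc] at hk
    rw [hc_eq]
    apply div_pos _ hlam
    have e1 : 2 * Real.pi / (n:ℝ) = 2 * α := by rw [hα]; ring
    have e2 : 2 * Real.pi * (k:ℝ) / n = 2 * ((k:ℝ) * α) := by rw [hα]; ring
    rw [e1, e2, cos_diff_eq α k]
    have hsv : 0 < Real.sin (((k:ℝ) + 1) * α) := by
      have := sin_pos_of_mem n hn (m := k + 1) (by omega) (by omega)
      rwa [show ((k + 1 : ℕ):ℝ) = (k:ℝ) + 1 by push_cast; ring] at this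
    have hsu : 0 < Real.sin (((k:ℝ) - 1) * α) := by
      have := sin_pos_of_mem n hn (m := k - 1) (by omega) (by omega)
      rwa [show ((k - 1 : ℕ):ℝ) = (k:ℝ) - 1 by
        have : (1:ℕ) ≤ k := by omega
        push_cast [Nat.cast_sub this]; ring] at this
    positivity
  -- vanishing of F outside K
  have hF1 : F n z 1 = 0 := F_one_eq z hcos hsin
  have hFvanish : ∀ k ∈ range n, k ∉ K → F n z k = 0 := by
    intro k hkr hkK
    rw [Finset.mem_range] at hkr
    rw [hK, Finset.mem_Icc] at hkK
    have : k = 0 ∨ k = 1 ∨ k = n - 1 := by omega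
    rcases this with rfl | rfl | rfl
    · exact F_zero_eq z h0
    · exact hF1
    · exact F_pred_eq z hF1
  -- sup attained
  set M := Finset.univ.sup' Finset.univ_nonempty fun i : ZMod n => |z i| with hM
  obtain ⟨i₀, _, hMi⟩ := Finset.exists_mem_eq_sup' (Finset.univ_nonempty) (fun i : ZMod n => |z i|)
  have hM0 : 0 ≤ M := by rw [hM, hMi]; positivity
  -- step 1 : n * M ≤ ∑_{k ∈ K} ‖F n z k‖
  have step1 : (n:ℝ) * M ≤ ∑ k ∈ K, ‖F n z k‖ := by
    have hinv := inversion z i₀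
    have hnorm : ‖((n:ℂ) * z i₀)‖ = (n:ℝ) * M := by
      rw [norm_mul, Complex.norm_natCast, Complex.norm_real, Real.norm_eq_abs, hM, hMi]
    calc (n:ℝ) * M = ‖∑ k ∈ range n, F n z k * (starRingEnd ℂ) ((w n) ^ (ZMod.val i₀ * k))‖ := by
          rw [hinv, hnorm]
      _ ≤ ∑ k ∈ range n, ‖F n z k * (starRingEnd ℂ) ((w n) ^ (ZMod.val i₀ * k))‖ :=
          norm_sum_le _ _
      _ = ∑ k ∈ range n, ‖F n z k‖ := by
          refine Finset.sum_congr rfl fun k _ => ?_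
          rw [norm_mul, RCLike.norm_conj, norm_w_pow, mul_one]
      _ = ∑ k ∈ K, ‖F n z k‖ := by
          symm
          apply Finset.sum_subset hKsub
          intro k hk1 hk2
          rw [hFvanish k hk1 hk2, norm_zero]
  -- step 2 : Cauchy-Schwarz
  have step2 : (∑ k ∈ K, ‖F n z k‖) ^ 2 ≤
      (∑ k ∈ K, (c k)⁻¹) * (∑ k ∈ K, c k * ‖F n z k‖ ^ 2) := by
    have h := Finset.sum_mul_sq_le_sq_mul_sq K (fun k => Real.sqrt (c k)⁻¹)
      (fun k => Real.sqrt (c k) * ‖F n z k‖)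
    have e1 : ∀ k ∈ K, Real.sqrt (c k)⁻¹ * (Real.sqrt (c k) * ‖F n z k‖) = ‖F n z k‖ := by
      intro k hk
      rw [← mul_assoc, ← Real.sqrt_mul (inv_nonneg.mpr (le_of_lt (hcpos k hk))) _,
        inv_mul_cancel₀ (ne_of_gt (hcpos k hk)), Real.sqrt_one, one_mul]
    have e2 : ∀ k ∈ K, (Real.sqrt (c k)⁻¹) ^ 2 = (c k)⁻¹ := by
      intro k hk
      exact Real.sq_sqrt (inv_nonneg.mpr (le_of_lt (hcpos k hk)))
    have e3 : ∀ k ∈ K, (Real.sqrt (c k) * ‖F n z k‖) ^ 2 = c k * ‖F n z k‖ ^ 2 := by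
      intro k hk
      rw [mul_pow, Real.sq_sqrt (le_of_lt (hcpos k hk))]
    rwa [Finset.sum_congr rfl e1, Finset.sum_congr rfl e2, Finset.sum_congr rfl e3] at h
  -- step 3 : the weighted sum equals n² * LHS
  set E := 1 / lam * ((∑ j, (z j - z (j + 1)) ^ 2) / n) - 2 * ((∑ j, (z j) ^ 2) / n) with hE
  have step3 : ∑ k ∈ K, c k * ‖F n z k‖ ^ 2 = (n:ℝ) ^ 2 * E := by
    rw [Finset.sum_subset hKsub (fun k hk1 hk2 => by rw [hFvanish k hk1 hk2]; simp)]
    exact sum_c_identity z (ne_of_gt hlam)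
  -- step 4 : sum of inverses is σ
  set sig := 3 / 4 - 1 / 4 * Real.tan (Real.pi / n) ^ 2 with hsig
  have step4 : ∑ k ∈ K, (c k)⁻¹ = sig := by
    rw [hsig, ← sigma_sum n hn]
    refine Finset.sum_congr rfl fun k hk => ?_
    rw [hc_eq, inv_div]
  -- σ > 0
  have hsigpos : 0 < sig := by
    rw [← step4]
    apply Finset.sum_pos
    · intro k hk
      exact inv_pos.mpr (hcpos k hk)
    · rw [hK]
      rw [Finset.nonempty_Icc]
      omega
  -- combine
  have key : ((n:ℝ) * M) ^ 2 ≤ sig * ((n:ℝ) ^ 2 * E) := by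
    calc ((n:ℝ) * M) ^ 2 ≤ (∑ k ∈ K, ‖F n z k‖) ^ 2 := by
          apply pow_le_pow_left₀ (by positivity) step1
      _ ≤ (∑ k ∈ K, (c k)⁻¹) * (∑ k ∈ K, c k * ‖F n z k‖ ^ 2) := step2
      _ = sig * ((n:ℝ) ^ 2 * E) := by rw [step4, step3]
  have hM2 : M ^ 2 ≤ sig * E := by
    have h1 : (n:ℝ)^2 * M^2 ≤ (n:ℝ)^2 * (sig * E) := by
      calc (n:ℝ)^2 * M^2 = ((n:ℝ) * M)^2 := by ring
        _ ≤ sig * ((n:ℝ)^2 * E) := key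
        _ = (n:ℝ)^2 * (sig * E) := by ring
    exact le_of_mul_le_mul_left h1 (by positivity)
  rw [ge_iff_le, inv_mul_le_iff₀ hsigpos]
  linarith [hM2]
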